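/- Let V and W be real Hilbert spaces, V_h ⊆ V and W_h ⊆ W subspaces, B : V → W a bounded linear map, A : V × V → ℝ bilinear with |A(u,v)| ≤ M·‖u‖·‖v‖ and A(v,v) ≥ C·‖v‖² for all u, v (M, C > 0), f a continuous linear functional on V with operator norm ‖f‖, and F : W → ℝ convex and differentiable with gradient ∇F : W → W. Let α_k > 0 (1 ≤ k ≤ ℓ), ψ₀ ∈ W_h, and let (u_k, ψ_k) ∈ V_h × W_h for 1 ≤ k ≤ ℓ satisfy, for every k: α_k·A(u_k, v) + ⟨B v, ψ_k − ψ_{k−1}⟩ = α_k·f(v) for all v ∈ V_h, and ⟨B u_k − ∇F(ψ_k), w⟩ = 0 for all w ∈ W_h. Suppose further u₀ ∈ V_h satisfies ⟨B u₀ − ∇F(ψ₀), w⟩ = 0 for all w ∈ W_h. Then the weighted average ū_ℓ = (Σ_{k=1}^ℓ α_k u_k)/(Σ_{k=1}^ℓ α_k) satisfies C·‖ū_ℓ‖² ≤ M·‖ū_ℓ‖·‖u₀‖ + ‖f‖·(‖ū_ℓ‖ + ‖u₀‖). -/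

import Mathlib

open scoped RealInnerProductSpace

lemma grad_convex_ineq {W : Type*} [NormedAddCommGroup W] [InnerProductSpace ℝ W]
    [CompleteSpace W] {F : W → ℝ} (hF : ConvexOn ℝ Set.univ F) {gradF : W → W}
    (hgrad : ∀ φ, HasGradientAt F (gradF φ) φ) (x y : W) :
    F x + ⟪gradF x, y - x⟫ ≤ F y := by
  set g : ℝ → ℝ := F ∘ (AffineMap.lineMap x y) with hg
  have hc : HasDerivAt (fun t : ℝ => (AffineMap.lineMap x y : ℝ →ᵃ[ℝ] W) t) (y - x) 0 := by
    simp only [AffineMap.lineMap_apply, vsub_eq_sub, vadd_eq_add]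
    simpa using ((hasDerivAt_id (0:ℝ)).smul_const (y - x)).add_const x
  have hF' : HasFDerivAt F (InnerProductSpace.toDual ℝ W (gradF x))
      ((AffineMap.lineMap x y : ℝ →ᵃ[ℝ] W) 0) := by
    rw [AffineMap.lineMap_apply_zero]
    exact (hasGradientAt_iff_hasFDerivAt).mp (hgrad x)
  have hgd : HasDerivAt g ⟪gradF x, y - x⟫ 0 := by
    have := hF'.comp_hasDerivAt 0 hc
    simpa [hg, InnerProductSpace.toDual_apply_apply] using this
  have hgconv : ConvexOn ℝ Set.univ g := by
    have := hF.comp_affineMap (AffineMap.lineMap x y)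
    simpa [hg] using this
  have := hgconv.le_slope_of_hasDerivAt (Set.mem_univ (0:ℝ)) (Set.mem_univ (1:ℝ))
    zero_lt_one hgd
  rw [slope_def_field] at this
  simp only [hg, Function.comp_apply, AffineMap.lineMap_apply_zero,
    AffineMap.lineMap_apply_one, sub_zero, div_one] at this
  linarith

/-- Stability of the weighted primal averages of the conforming proximal
Galerkin scheme: the weighted average `ū_ℓ = (Σ α_k u_k)/(Σ α_k)` satisfies
`C·‖ū_ℓ‖² ≤ M·‖ū_ℓ‖·‖u₀‖ + ‖f‖·(‖ū_ℓ‖ + ‖u₀‖)`. -/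
theorem statement7
    {V W : Type*} [NormedAddCommGroup V] [InnerProductSpace ℝ V] [CompleteSpace V]
    [NormedAddCommGroup W] [InnerProductSpace ℝ W] [CompleteSpace W]
    (Vh : Submodule ℝ V) (Wh : Submodule ℝ W)
    (B : V →L[ℝ] W)
    (A : V →ₗ[ℝ] V →ₗ[ℝ] ℝ) (M C : ℝ) (hM : 0 < M) (hC : 0 < C)
    (hAbdd : ∀ u v : V, |A u v| ≤ M * ‖u‖ * ‖v‖)
    (hAcoer : ∀ v : V, C * ‖v‖ ^ 2 ≤ A v v)
    (f : V →L[ℝ] ℝ)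
    (F : W → ℝ) (hFconv : ConvexOn ℝ Set.univ F)
    (gradF : W → W) (hgrad : ∀ φ : W, HasGradientAt F (gradF φ) φ)
    (ℓ : ℕ) (hℓ : 1 ≤ ℓ)
    (α : ℕ → ℝ) (hα : ∀ k, 1 ≤ k → k ≤ ℓ → 0 < α k)
    (u : ℕ → V) (ψ : ℕ → W)
    (hu0mem : u 0 ∈ Vh) (hψ0mem : ψ 0 ∈ Wh)
    (humem : ∀ k, 1 ≤ k → k ≤ ℓ → u k ∈ Vh)
    (hψmem : ∀ k, 1 ≤ k → k ≤ ℓ → ψ k ∈ Wh)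
    (hscheme : ∀ k, 1 ≤ k → k ≤ ℓ → ∀ v ∈ Vh,
      α k * A (u k) v + ⟪B v, ψ k - ψ (k - 1)⟫ = α k * f v)
    (hlatent : ∀ k, 1 ≤ k → k ≤ ℓ → ∀ w ∈ Wh, ⟪B (u k) - gradF (ψ k), w⟫ = 0)
    (hlatent0 : ∀ w ∈ Wh, ⟪B (u 0) - gradF (ψ 0), w⟫ = 0)
    (ubar : V)
    (hubar : ubar =
      (∑ k ∈ Finset.Icc 1 ℓ, α k)⁻¹ • ∑ k ∈ Finset.Icc 1 ℓ, α k • u k) :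
    C * ‖ubar‖ ^ 2 ≤ M * ‖ubar‖ * ‖u 0‖ + ‖f‖ * (‖ubar‖ + ‖u 0‖) := by
  classical
  set K : Finset ℕ := Finset.Icc 1 ℓ with hK
  set S : ℝ := ∑ k ∈ K, α k with hS
  set T : V := ∑ k ∈ K, α k • u k with hT
  have hKne : K.Nonempty := Finset.nonempty_Icc.mpr hℓ
  have hSpos : 0 < S := Finset.sum_pos (fun k hk => by
    obtain ⟨h1, h2⟩ := Finset.mem_Icc.mp hk; exact hα k h1 h2) hKne
  have hTS : T = S • ubar := by
    rw [hubar, smul_smul, mul_inv_cancel₀ hSpos.ne', one_smul]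
  -- Bregman-type function
  set D : ℕ → ℝ := fun k => F (ψ k) - ⟪gradF (ψ 0), ψ k⟫ with hD
  -- per-step inner product identity
  have hBinner : ∀ k, 1 ≤ k → k ≤ ℓ →
      ⟪B (u k - u 0), ψ k - ψ (k - 1)⟫ =
        ⟪gradF (ψ k) - gradF (ψ 0), ψ k - ψ (k - 1)⟫ := by
    intro k hk1 hk2
    have hprev : ψ (k - 1) ∈ Wh := by
      rcases eq_or_lt_of_le hk1 with h | h
      · simpa [← h] using hψ0mem
      · exact hψmem (k - 1) (by omega) (by omega)
    have hw : ψ k - ψ (k - 1) ∈ Wh := Submodule.sub_mem _ (hψmem k hk1 hk2) hprev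
    have h1 := hlatent k hk1 hk2 _ hw
    have h0 := hlatent0 _ hw
    rw [inner_sub_left] at h1 h0
    rw [map_sub, inner_sub_left, inner_sub_left]
    linarith
  -- per-step Bregman inequality
  have hDstep : ∀ k, 1 ≤ k → k ≤ ℓ →
      D k - D (k - 1) ≤ ⟪gradF (ψ k) - gradF (ψ 0), ψ k - ψ (k - 1)⟫ := by
    intro k hk1 hk2
    have key := grad_convex_ineq hFconv hgrad (ψ k) (ψ (k - 1))
    rw [inner_sub_right] at key
    simp only [hD]
    rw [inner_sub_left, inner_sub_right, inner_sub_right]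
    linarith
  -- telescoping
  have htel : ∑ k ∈ K, (D k - D (k - 1)) = D ℓ - D 0 := by
    rw [hK, ← Finset.Ico_add_one_right_eq_Icc, Finset.sum_Ico_eq_sum_range]
    rw [Finset.sum_congr rfl (fun i _ => by
      rw [show 1 + i = i + 1 from add_comm 1 i, Nat.add_sub_cancel])]
    exact Finset.sum_range_sub D ℓ
  have hD0 : 0 ≤ D ℓ - D 0 := by
    have key := grad_convex_ineq hFconv hgrad (ψ 0) (ψ ℓ)
    rw [inner_sub_right] at key
    simp only [hD]
    linarith
  -- key inequality from the scheme
  have hkey : ∑ k ∈ K, α k * A (u k) (u k - u 0) ≤ ∑ k ∈ K, α k * f (u k - u 0) := by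
    have hsummand : ∀ k ∈ K, α k * A (u k) (u k - u 0) =
        α k * f (u k - u 0) - ⟪B (u k - u 0), ψ k - ψ (k - 1)⟫ := by
      intro k hk
      obtain ⟨hk1, hk2⟩ := Finset.mem_Icc.mp hk
      have := hscheme k hk1 hk2 (u k - u 0) (Submodule.sub_mem _ (humem k hk1 hk2) hu0mem)
      linarith
    rw [Finset.sum_congr rfl hsummand, Finset.sum_sub_distrib]
    have hlow : D ℓ - D 0 ≤ ∑ k ∈ K, ⟪B (u k - u 0), ψ k - ψ (k - 1)⟫ := by
      rw [← htel]
      refine Finset.sum_le_sum fun k hk => ?_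
      obtain ⟨hk1, hk2⟩ := Finset.mem_Icc.mp hk
      rw [hBinner k hk1 hk2]
      exact hDstep k hk1 hk2
    linarith
  -- linearity computations
  have hsum1 : ∀ w : V, ∑ k ∈ K, α k * A (u k) w = A T w := by
    intro w
    rw [hT, map_sum, LinearMap.coe_sum, Finset.sum_apply]
    exact Finset.sum_congr rfl fun k _ => by
      rw [map_smul, LinearMap.smul_apply, smul_eq_mul]
  have hsum2 : ∀ v : V, ∑ k ∈ K, α k * A v (u k) = A v T := by
    intro v
    rw [hT, map_sum]
    exact Finset.sum_congr rfl fun k _ => by rw [map_smul, smul_eq_mul]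
  have hsumf : ∑ k ∈ K, α k * f (u k) = f T := by
    rw [hT, map_sum]
    exact Finset.sum_congr rfl fun k _ => by rw [map_smul, smul_eq_mul]
  have hATu : A T ubar = S * A ubar ubar := by
    rw [hTS, map_smul, LinearMap.smul_apply, smul_eq_mul]
  have hAuT : A ubar T = S * A ubar ubar := by
    rw [hTS, map_smul, smul_eq_mul]
  have hATu0 : A T (u 0) = S * A ubar (u 0) := by
    rw [hTS, map_smul, LinearMap.smul_apply, smul_eq_mul]
  have hfT : f T = S * f ubar := by rw [hTS, map_smul, smul_eq_mul]
  -- Jensen for the quadratic form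
  have hquad : 0 ≤ ∑ k ∈ K, α k * A (u k - ubar) (u k - ubar) := by
    refine Finset.sum_nonneg fun k hk => ?_
    obtain ⟨hk1, hk2⟩ := Finset.mem_Icc.mp hk
    refine mul_nonneg (hα k hk1 hk2).le (le_trans (by positivity) (hAcoer _))
  have hexp : ∑ k ∈ K, α k * A (u k - ubar) (u k - ubar) =
      (∑ k ∈ K, α k * A (u k) (u k)) - A T ubar - A ubar T + S * A ubar ubar := by
    have step : ∀ k ∈ K, α k * A (u k - ubar) (u k - ubar) =
        α k * A (u k) (u k) - α k * A (u k) ubar - α k * A ubar (u k)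
          + α k * A ubar ubar := by
      intro k _
      simp only [map_sub, LinearMap.sub_apply]
      ring
    rw [Finset.sum_congr rfl step]
    rw [Finset.sum_add_distrib, Finset.sum_sub_distrib, Finset.sum_sub_distrib,
      hsum1, hsum2, ← Finset.sum_mul]
  have hJensen : S * A ubar ubar ≤ ∑ k ∈ K, α k * A (u k) (u k) := by
    rw [hexp, hATu, hAuT] at hquad
    linarith
  -- assemble
  have hexp2 : ∑ k ∈ K, α k * A (u k) (u k - u 0) =
      (∑ k ∈ K, α k * A (u k) (u k)) - A T (u 0) := by
    rw [← hsum1, ← Finset.sum_sub_distrib]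
    exact Finset.sum_congr rfl fun k _ => by rw [map_sub]; ring
  have hexpf : ∑ k ∈ K, α k * f (u k - u 0) = f T - S * f (u 0) := by
    calc ∑ k ∈ K, α k * f (u k - u 0)
        = ∑ k ∈ K, (α k * f (u k) - α k * f (u 0)) :=
          Finset.sum_congr rfl fun k _ => by rw [map_sub]; ring
      _ = (∑ k ∈ K, α k * f (u k)) - ∑ k ∈ K, α k * f (u 0) := Finset.sum_sub_distrib _ _
      _ = f T - S * f (u 0) := by rw [hsumf, ← Finset.sum_mul, ← hS]
  rw [hexp2, hexpf, hATu0, hfT] at hkey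
  have hmain : A ubar ubar ≤ A ubar (u 0) + f ubar - f (u 0) := by
    have : S * A ubar ubar ≤ S * (A ubar (u 0) + f ubar - f (u 0)) := by
      calc S * A ubar ubar ≤ ∑ k ∈ K, α k * A (u k) (u k) := hJensen
        _ ≤ S * A ubar (u 0) + S * f ubar - S * f (u 0) := by linarith
        _ = S * (A ubar (u 0) + f ubar - f (u 0)) := by ring
    exact le_of_mul_le_mul_left this hSpos
  have h1 : A ubar (u 0) ≤ M * ‖ubar‖ * ‖u 0‖ := le_trans (le_abs_self _) (hAbdd _ _)
  have h2 : f ubar ≤ ‖f‖ * ‖ubar‖ := by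
    have := f.le_opNorm ubar
    rw [Real.norm_eq_abs] at this
    exact le_trans (le_abs_self _) this
  have h3 : -(f (u 0)) ≤ ‖f‖ * ‖u 0‖ := by
    have := f.le_opNorm (u 0)
    rw [Real.norm_eq_abs] at this
    exact le_trans (neg_le_abs _) this
  have h4 := hAcoer ubar
  nlinarith [h1, h2, h3, h4, hmain]
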